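/- arXiv:1310.7872 — 4 statements merged into one kernel-verified Lean document; each statement's English description precedes it below -/
import Mathlib

section
/- Let (M^{(n)})_{n≥1} be symmetric measures on Xⁿ such that M^{(n)}(Λⁿ) ≤ C_Λⁿ · n! for all n and compact Λ. Then for all i_1,...,i_n ∈ ℕ, (1/n!) · M_{i_1,...,i_n}(Λ^{(n)}_{0̂}) ≤ i_1! ⋯ i_n! · C_Λ^{i_1+...+i_n}, where M_{i_1,...,i_n} is the measure on the off-diagonal set X^{(n)}_{0̂} obtained by restricting M^{(i_1+...+i_n)} to the diagonal stratum where the first i_1 coordinates coincide, the next i_2 coordinates coincide, etc., with the n group-values pairwise distinct, and pushing forward under the map sending each group to its common value. -/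
open MeasureTheory
open scoped Nat ENNReal NNReal
open scoped Classical

lemma card_perm_fix_fibers {I n : ℕ} (i : Fin n → ℕ) (c : Fin I → Fin n)
    (hfib : ∀ j, (Finset.univ.filter fun k => c k = j).card = i j) :
    (Finset.univ.filter fun τ : Equiv.Perm (Fin I) => ∀ k, c (τ k) = c k).card
      ≤ ∏ j, (i j)! := by
  classical
  have hcard : Fintype.card (∀ j : Fin n, Equiv.Perm {k : Fin I // c k = j})
      = ∏ j, (i j)! := by
    rw [Fintype.card_pi]
    refine Finset.prod_congr rfl fun j _ => ?_
    rw [Fintype.card_perm, Fintype.card_subtype, hfib]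
  rw [← hcard]
  have := Finset.card_le_card_of_injOn
    (f := fun τ : Equiv.Perm (Fin I) =>
      if h : ∀ k, c (τ k) = c k then
        (fun j => τ.subtypePerm (fun k => by simp [h k]) : ∀ j, Equiv.Perm {k : Fin I // c k = j})
      else fun j => 1)
    (s := Finset.univ.filter fun τ : Equiv.Perm (Fin I) => ∀ k, c (τ k) = c k)
    (t := Finset.univ) (fun a _ => Finset.mem_univ _) ?_
  · simpa [Finset.card_univ] using this
  · intro τ hτ τ' hτ' heq
    rw [Finset.mem_coe, Finset.mem_filter] at hτ hτ'
    simp only [dif_pos hτ.2, dif_pos hτ'.2] at heq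
    apply Equiv.ext; intro k
    have := congrFun heq (c k)
    have h2 := congrArg (fun e => (e ⟨k, rfl⟩ : {k' : Fin I // c k' = c k}).1) this
    simp only [Equiv.Perm.subtypePerm_apply] at h2
    exact h2

lemma card_stratum_perms {X : Type*} {I n : ℕ} (i : Fin n → ℕ) (c : Fin I → Fin n)
    (rep : Fin n → Fin I)
    (hfib : ∀ j, (Finset.univ.filter fun k => c k = j).card = i j)
    (hrep : ∀ j, c (rep j) = j) (x : Fin I → X) :
    (Finset.univ.filter fun σ : Equiv.Perm (Fin I) =>
        (∀ k l, c k = c l → x (σ k) = x (σ l)) ∧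
          Function.Injective fun j => x (σ (rep j))).card
      ≤ n ! * ∏ j, (i j)! := by
  classical
  set S := Finset.univ.filter fun σ : Equiv.Perm (Fin I) =>
      (∀ k l, c k = c l → x (σ k) = x (σ l)) ∧
        Function.Injective fun j => x (σ (rep j)) with hS
  rcases S.eq_empty_or_nonempty with h | ⟨σ₀, hσ₀⟩
  · simp [h]
  have memS : ∀ σ ∈ S, (∀ k l, c k = c l → x (σ k) = x (σ l)) ∧
      Function.Injective fun j => x (σ (rep j)) := by
    intro σ hσ; exact (Finset.mem_filter.mp hσ).2
  -- key: for σ ∈ S, c a = c b ↔ x (σ a) = x (σ b)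
  have key : ∀ σ ∈ S, ∀ a b, c a = c b ↔ x (σ a) = x (σ b) := by
    intro σ hσ a b
    obtain ⟨hcst, hinj⟩ := memS σ hσ
    constructor
    · exact hcst a b
    · intro hx
      have ha : x (σ (rep (c a))) = x (σ a) := hcst _ _ (hrep _)
      have hb : x (σ (rep (c b))) = x (σ b) := hcst _ _ (hrep _)
      exact hinj (show x (σ (rep (c a))) = x (σ (rep (c b))) by rw [ha, hb, hx])
  set f : Equiv.Perm (Fin I) → (Fin n → X) := fun σ j => x (σ (rep j)) with hf
  have hfiber : ∀ a ∈ S.image f,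
      (S.filter fun σ => f σ = a).card ≤ ∏ j, (i j)! := by
    intro a ha
    obtain ⟨σ', hσ', hfa⟩ := Finset.mem_image.mp ha
    refine le_trans (Finset.card_le_card_of_injOn (fun σ => σ'⁻¹ * σ)
      ?_ ?_) (card_perm_fix_fibers i c hfib)
    · intro σ hσ
      rw [Finset.mem_coe, Finset.mem_filter] at hσ
      obtain ⟨hσS, hfσ⟩ := hσ
      refine Finset.mem_filter.mpr ⟨Finset.mem_univ _, fun k => ?_⟩
      have h1 : x (σ' (σ'⁻¹ (σ k))) = x (σ' (rep (c k))) := by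
        have e1 : x (σ' (rep (c k))) = a (c k) := by rw [← hfa]
        have e2 : x (σ (rep (c k))) = a (c k) := by rw [← hfσ]
        have e3 : x (σ (rep (c k))) = x (σ k) :=
          (memS σ hσS).1 _ _ (hrep _)
        simp only [Equiv.Perm.coe_inv, Equiv.apply_symm_apply]
        rw [e1, ← e2, e3]
      have := (key σ' hσ' (σ'⁻¹ (σ k)) (rep (c k))).mpr h1
      simpa [hrep] using this
    · intro σ₁ _ σ₂ _ h12
      exact mul_left_cancel h12
  have himg : (S.image f).card ≤ n ! := by
    set V : Finset X := Finset.image x Finset.univ with hV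
    have hVeq : V = Finset.image (f σ₀) Finset.univ := by
      apply Finset.Subset.antisymm
      · intro v hv
        obtain ⟨k, _, hk⟩ := Finset.mem_image.mp hv
        refine Finset.mem_image.mpr ⟨c (σ₀⁻¹ k), Finset.mem_univ _, ?_⟩
        have : x (σ₀ (rep (c (σ₀⁻¹ k)))) = x (σ₀ (σ₀⁻¹ k)) :=
          (memS σ₀ hσ₀).1 _ _ (hrep _)
        simpa [hk] using this
      · intro v hv
        obtain ⟨j, _, hj⟩ := Finset.mem_image.mp hv
        exact Finset.mem_image.mpr ⟨σ₀ (rep j), Finset.mem_univ _, hj⟩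
    have hVcard : V.card = n := by
      rw [hVeq, Finset.card_image_of_injective _ (memS σ₀ hσ₀).2, Finset.card_univ,
        Fintype.card_fin]
    have hprop : ∀ g ∈ S.image f, Function.Injective g ∧ ∀ j, g j ∈ V := by
      intro g hg
      obtain ⟨σ, hσ, hfg⟩ := Finset.mem_image.mp hg
      subst hfg
      exact ⟨(memS σ hσ).2, fun j => Finset.mem_image.mpr ⟨σ (rep j), Finset.mem_univ _, rfl⟩⟩
    have e₀ : Fin n ↪ ↥V := ⟨fun j => ⟨f σ₀ j, by
        rw [hVeq]; exact Finset.mem_image.mpr ⟨j, Finset.mem_univ _, rfl⟩⟩,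
      fun a b hab => (memS σ₀ hσ₀).2 (congrArg Subtype.val hab)⟩
    have hle := Finset.card_le_card_of_injOn
      (f := fun g : Fin n → X =>
        if h : Function.Injective g ∧ ∀ j, g j ∈ V then
          (⟨fun j => ⟨g j, h.2 j⟩, fun a b hab => h.1 (congrArg Subtype.val hab)⟩ : Fin n ↪ ↥V)
        else e₀)
      (s := S.image f) (t := Finset.univ) (fun a _ => Finset.mem_univ _) ?_
    · calc (S.image f).card ≤ (Finset.univ : Finset (Fin n ↪ ↥V)).card := hle
        _ = Fintype.card (Fin n ↪ ↥V) := Finset.card_univ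
        _ = n ! := by
          rw [Fintype.card_embedding_eq, Fintype.card_fin, Fintype.card_coe, hVcard,
            Nat.descFactorial_self]
    · intro g hg g' hg' heq
      rw [Finset.mem_coe] at hg hg'
      simp only [dif_pos (hprop g hg), dif_pos (hprop g' hg')] at heq
      funext j
      have := congrArg (fun e => (e.toFun j : X)) heq
      simpa using this
  calc S.card ≤ (∏ j, (i j)!) * (S.image f).card :=
        Finset.card_le_mul_card_image S _ hfiber
    _ ≤ (∏ j, (i j)!) * n ! := Nat.mul_le_mul_left _ himg
    _ = n ! * ∏ j, (i j)! := Nat.mul_comm _ _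


/-- Lemma 2.3 of the paper: if `(M m)` is a family of symmetric measures on `X^m` with
`M m (Λ^m) ≤ C_Λ^m · m!` for each compact `Λ`, then
`(1/n!) · M_{i 0, ..., i (n-1)} (Λ^{(n)}_{0̂}) ≤ i 0 ! ⋯ i (n-1)! · C_Λ^{i 0 + ... + i (n-1)}`.
Here the diagonal stratum of `X^I` (`I = ∑ i j`) is parametrized by a monotone surjection
`c : Fin I → Fin n` with fibers of cardinalities `i j` (the interval partition with consecutive
blocks of sizes `i 0, ..., i (n-1)`) together with a section `rep`, and
`M_{i 0,...,i (n-1)}` is the pushforward under `B_π : x ↦ (x (rep 0), ..., x (rep (n-1)))` of the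
restriction of `M I` to the stratum where coordinates coincide exactly within the blocks. -/
theorem stratum_measure_bound
    {X : Type*} [TopologicalSpace X] [PolishSpace X] [MeasurableSpace X] [BorelSpace X]
    (M : (m : ℕ) → Measure (Fin m → X))
    (hsym : ∀ (m : ℕ) (σ : Equiv.Perm (Fin m)),
      Measure.map (fun x => x ∘ σ) (M m) = M m)
    (Λ : Set X) (hΛ : IsCompact Λ) (C : ℝ≥0)
    (hC : ∀ m : ℕ, M m {x | ∀ k, x k ∈ Λ} ≤ (C : ℝ≥0∞) ^ m * (m ! : ℝ≥0∞))
    (n I : ℕ) (i : Fin n → ℕ) (hi : ∀ j, 1 ≤ i j) (hI : I = ∑ j, i j)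
    (c : Fin I → Fin n) (rep : Fin n → Fin I) (hmono : Monotone c)
    (hfib : ∀ j, (Finset.univ.filter fun k => c k = j).card = i j)
    (hrep : ∀ j, c (rep j) = j) :
    Measure.map (fun x : Fin I → X => fun j => x (rep j))
        ((M I).restrict {x | (∀ k l, c k = c l → x k = x l) ∧
          Function.Injective fun j => x (rep j)})
        {y : Fin n → X | (∀ j, y j ∈ Λ) ∧ Function.Injective y}
      ≤ (n ! : ℝ≥0∞) * ((∏ j, ((i j)! : ℝ≥0∞)) * (C : ℝ≥0∞) ^ I) := by
  classical
  have hΛm : MeasurableSet Λ := hΛ.isClosed.measurableSet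
  -- measurability of coordinate-equality sets
  have hdiag : ∀ (m : ℕ) (k l : Fin m), MeasurableSet {x : Fin m → X | x k = x l} := by
    intro m k l
    exact StronglyMeasurable.measurableSet_eq_fun
      (measurable_pi_apply k).stronglyMeasurable (measurable_pi_apply l).stronglyMeasurable
  have hinj_meas : ∀ (m : ℕ), MeasurableSet {y : Fin m → X | Function.Injective y} := by
    intro m
    have : {y : Fin m → X | Function.Injective y}
        = ⋂ (k : Fin m) (l : Fin m), {y : Fin m → X | y k = y l → k = l} := by
      ext y
      simp only [Set.mem_setOf_eq, Set.mem_iInter, Function.Injective]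
    rw [this]
    refine MeasurableSet.iInter fun k => MeasurableSet.iInter fun l => ?_
    by_cases hkl : k = l
    · have : {y : Fin m → X | y k = y l → k = l} = Set.univ := by
        ext y; simp [hkl]
      rw [this]; exact MeasurableSet.univ
    · have : {y : Fin m → X | y k = y l → k = l} = {y : Fin m → X | y k = y l}ᶜ := by
        ext y; simp only [Set.mem_setOf_eq, Set.mem_compl_iff]
        exact ⟨fun h h' => hkl (h h'), fun h h' => absurd h' h⟩
      rw [this]; exact (hdiag m k l).compl
  have hΛset_meas : ∀ (m : ℕ), MeasurableSet {x : Fin m → X | ∀ k, x k ∈ Λ} := by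
    intro m
    have : {x : Fin m → X | ∀ k, x k ∈ Λ} = ⋂ k, (fun x : Fin m → X => x k) ⁻¹' Λ := by
      ext x; simp [Set.mem_iInter]
    rw [this]
    exact MeasurableSet.iInter fun k => (measurable_pi_apply k) hΛm
  -- the projection map
  set f : (Fin I → X) → (Fin n → X) := fun x => fun j => x (rep j) with hf
  have hfm : Measurable f := measurable_pi_lambda _ fun j => measurable_pi_apply _
  -- measurable sets
  set S₀ : Set (Fin I → X) := {x | (∀ k l, c k = c l → x k = x l) ∧
      Function.Injective fun j => x (rep j)} with hS₀
  have hconst_meas : MeasurableSet {x : Fin I → X | ∀ k l, c k = c l → x k = x l} := by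
    have : {x : Fin I → X | ∀ k l, c k = c l → x k = x l}
        = ⋂ (k) (l), {x : Fin I → X | c k = c l → x k = x l} := by
      ext x; simp [Set.mem_iInter]
    rw [this]
    refine MeasurableSet.iInter fun k => MeasurableSet.iInter fun l => ?_
    by_cases hkl : c k = c l
    · have : {x : Fin I → X | c k = c l → x k = x l} = {x : Fin I → X | x k = x l} := by
        ext x; simp [hkl]
      rw [this]; exact hdiag I k l
    · have : {x : Fin I → X | c k = c l → x k = x l} = Set.univ := by
        ext x; simp [hkl]
      rw [this]; exact MeasurableSet.univ
  have hS₀m : MeasurableSet S₀ := by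
    have : S₀ = {x : Fin I → X | ∀ k l, c k = c l → x k = x l}
        ∩ (f ⁻¹' {y : Fin n → X | Function.Injective y}) := by
      ext x; simp [hS₀, hf, Set.mem_setOf_eq]
    rw [this]
    exact hconst_meas.inter (hfm (hinj_meas n))
  set T : Set (Fin n → X) := {y : Fin n → X | (∀ j, y j ∈ Λ) ∧ Function.Injective y} with hT
  have hTm : MeasurableSet T := (hΛset_meas n).inter (hinj_meas n)
  set A : Set (Fin I → X) := S₀ ∩ {x : Fin I → X | ∀ k, x k ∈ Λ} with hA
  have hAm : MeasurableSet A := hS₀m.inter (hΛset_meas I)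
  -- Step A : LHS ≤ M I A
  have stepA : Measure.map f ((M I).restrict S₀) T ≤ M I A := by
    rw [Measure.map_apply hfm hTm, Measure.restrict_apply (hfm hTm)]
    refine measure_mono ?_
    rintro x ⟨hxT, hxS⟩
    refine ⟨hxS, fun k => ?_⟩
    have h1 : x k = x (rep (c k)) := hxS.1 k (rep (c k)) (hrep (c k)).symm
    have h2 : x (rep (c k)) ∈ Λ := hxT.1 (c k)
    rw [h1]; exact h2
  -- Step B : invariance under permutations
  have hPre : ∀ σ : Equiv.Perm (Fin I),
      MeasurableSet ((fun y : Fin I → X => y ∘ σ) ⁻¹' A) := by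
    intro σ
    exact (measurable_pi_lambda _ fun k => measurable_pi_apply (σ k)) hAm
  have hinv : ∀ σ : Equiv.Perm (Fin I),
      M I ((fun y : Fin I → X => y ∘ σ) ⁻¹' A) = M I A := by
    intro σ
    have hm : Measurable (fun y : Fin I → X => y ∘ ⇑σ) :=
      measurable_pi_lambda _ fun k => measurable_pi_apply (σ k)
    conv_rhs => rw [← hsym I σ]
    rw [Measure.map_apply hm hAm]
  -- pointwise counting bound
  have hpt : ∀ x : Fin I → X,
      (∑ σ : Equiv.Perm (Fin I),
        ((fun y : Fin I → X => y ∘ σ) ⁻¹' A).indicator (1 : (Fin I → X) → ℝ≥0∞) x)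
      ≤ ((n ! * ∏ j, (i j)! : ℕ) : ℝ≥0∞)
        * ({x : Fin I → X | ∀ k, x k ∈ Λ}).indicator (1 : (Fin I → X) → ℝ≥0∞) x := by
    intro x
    have hsum : (∑ σ : Equiv.Perm (Fin I),
        ((fun y : Fin I → X => y ∘ σ) ⁻¹' A).indicator (1 : (Fin I → X) → ℝ≥0∞) x)
        = ((Finset.univ.filter fun σ : Equiv.Perm (Fin I) => x ∘ σ ∈ A).card : ℝ≥0∞) := by
      rw [← Finset.sum_boole]
      refine Finset.sum_congr rfl fun σ _ => ?_
      by_cases h : x ∘ σ ∈ A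
      · simp [Set.indicator_apply, Set.mem_preimage, h]
      · simp [Set.indicator_apply, Set.mem_preimage, h]
    rw [hsum]
    rcases (Finset.univ.filter fun σ : Equiv.Perm (Fin I) => x ∘ σ ∈ A).eq_empty_or_nonempty
      with h | ⟨σ₀, hσ₀⟩
    · simp [h]
    · have hσ₀A : x ∘ σ₀ ∈ A := (Finset.mem_filter.mp hσ₀).2
      have hxΛ : x ∈ {x : Fin I → X | ∀ k, x k ∈ Λ} := by
        intro k
        have := hσ₀A.2 (σ₀⁻¹ k)
        simpa using this
      rw [Set.indicator_of_mem hxΛ, Pi.one_apply, mul_one]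
      refine Nat.cast_le.mpr ?_
      refine le_trans (Finset.card_le_card ?_) (card_stratum_perms i c rep hfib hrep x)
      intro σ hσ
      rw [Finset.mem_filter] at hσ ⊢
      exact ⟨hσ.1, hσ.2.1.1, hσ.2.1.2⟩
  -- combine
  have hsum_eq : (∑ σ : Equiv.Perm (Fin I),
      M I ((fun y : Fin I → X => y ∘ σ) ⁻¹' A)) = (I ! : ℝ≥0∞) * M I A := by
    rw [Finset.sum_congr rfl fun σ _ => hinv σ, Finset.sum_const, Finset.card_univ,
      Fintype.card_perm, Fintype.card_fin, nsmul_eq_mul]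
  have hint : (∑ σ : Equiv.Perm (Fin I), M I ((fun y : Fin I → X => y ∘ σ) ⁻¹' A))
      ≤ ((n ! * ∏ j, (i j)! : ℕ) : ℝ≥0∞) * M I {x : Fin I → X | ∀ k, x k ∈ Λ} := by
    calc (∑ σ : Equiv.Perm (Fin I), M I ((fun y : Fin I → X => y ∘ σ) ⁻¹' A))
        = ∑ σ : Equiv.Perm (Fin I), ∫⁻ x,
            ((fun y : Fin I → X => y ∘ σ) ⁻¹' A).indicator (1 : (Fin I → X) → ℝ≥0∞) x ∂(M I) := by
          refine Finset.sum_congr rfl fun σ _ => ?_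
          rw [lintegral_indicator_one (hPre σ)]
      _ = ∫⁻ x, ∑ σ : Equiv.Perm (Fin I),
            ((fun y : Fin I → X => y ∘ σ) ⁻¹' A).indicator (1 : (Fin I → X) → ℝ≥0∞) x ∂(M I) := by
          rw [lintegral_finset_sum]
          intro σ _
          exact (measurable_one.indicator (hPre σ))
      _ ≤ ∫⁻ x, ((n ! * ∏ j, (i j)! : ℕ) : ℝ≥0∞)
            * ({x : Fin I → X | ∀ k, x k ∈ Λ}).indicator (1 : (Fin I → X) → ℝ≥0∞) x ∂(M I) :=
          lintegral_mono hpt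
      _ = ((n ! * ∏ j, (i j)! : ℕ) : ℝ≥0∞) * M I {x : Fin I → X | ∀ k, x k ∈ Λ} := by
          rw [lintegral_const_mul _ (measurable_one.indicator (hΛset_meas I)),
            lintegral_indicator_one (hΛset_meas I)]
  have hMA : M I A ≤ (n ! : ℝ≥0∞) * ((∏ j, ((i j)! : ℝ≥0∞)) * (C : ℝ≥0∞) ^ I) := by
    have h1 : (I ! : ℝ≥0∞) * M I A
        ≤ ((n ! * ∏ j, (i j)! : ℕ) : ℝ≥0∞) * ((C : ℝ≥0∞) ^ I * (I ! : ℝ≥0∞)) := by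
      rw [← hsum_eq]
      exact le_trans hint (mul_le_mul_right (hC I) _)
    have h2 : ((n ! * ∏ j, (i j)! : ℕ) : ℝ≥0∞) * ((C : ℝ≥0∞) ^ I * (I ! : ℝ≥0∞))
        = (I ! : ℝ≥0∞) * ((n ! : ℝ≥0∞) * ((∏ j, ((i j)! : ℝ≥0∞)) * (C : ℝ≥0∞) ^ I)) := by
      push_cast
      ring
    rw [h2] at h1
    have hne : (I ! : ℝ≥0∞) ≠ 0 := by
      simp [Nat.factorial_ne_zero]
    have hnt : (I ! : ℝ≥0∞) ≠ ⊤ := ENNReal.natCast_ne_top _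
    exact (ENNReal.mul_le_mul_iff_right hne hnt).mp h1
  exact le_trans stepA hMA
end

section
/- Let X be a locally compact Polish space and η = ∑_i s_i δ_{x_i} a discrete Radon measure on X with s_i > 0 and distinct atoms x_i. Then for any symmetric nonnegative measurable function f on Xⁿ vanishing outside the off-diagonal set and any exponents i_1,...,i_n ∈ ℕ, ⟨η^{⊗(i_1+...+i_n)}, R_{i_1,...,i_n} g⟩ = n! ∑_{{(x_1,s_1),...,(x_n,s_n)} ⊂ E(η)} g(x_1,...,x_n) s_1^{i_1} ⋯ s_n^{i_n}, where R_{i_1,...,i_n} g(y_1,...,y_I) := g(y_1, y_{i_1+1}, ..., y_{i_1+...+i_{n-1}+1}) · 1[first i_1 coordinates equal, next i_2 coordinates equal, ...], I = i_1+...+i_n, and E(η) = {(x_i, s_i)} is the set of atom-weight pairs. -/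
open MeasureTheory
open scoped Nat ENNReal

lemma tsum_pi_prod_aux {ι : Type*} [Countable ι] :
    ∀ (m : ℕ) (f : Fin m → ι → ℝ≥0∞),
      ∑' b : Fin m → ι, ∏ k, f k (b k) = ∏ k, ∑' a, f k a := by
  intro m
  induction m with
  | zero =>
    intro f
    haveI : Unique (Fin 0 → ι) := ⟨⟨fun k => k.elim0⟩, fun f => funext fun k => k.elim0⟩
    simp [tsum_eq_single (default : Fin 0 → ι) fun b hb => absurd (Subsingleton.elim b default) hb]
  | succ m ih =>
    intro f
    rw [← (Fin.consEquiv (fun _ : Fin (m+1) => ι)).tsum_eq]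
    have h1 : ∀ p : ι × (Fin m → ι),
        (∏ k, f k (Fin.consEquiv (fun _ : Fin (m+1) => ι) p k))
          = f 0 p.1 * ∏ k : Fin m, f k.succ (p.2 k) := by
      intro p
      simp only [Fin.consEquiv_apply]
      rw [Fin.prod_univ_succ, Fin.cons_zero]
      simp only [Fin.cons_succ]
    simp_rw [h1]
    rw [ENNReal.tsum_prod (f := fun (a : ι) (b : Fin m → ι) =>
      f 0 a * ∏ k : Fin m, f k.succ (b k))]
    simp_rw [ENNReal.tsum_mul_left]
    rw [ENNReal.tsum_mul_right, ih, Fin.prod_univ_succ]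

lemma pi_eq_sum_dirac_aux {X : Type*} [MeasurableSpace X] {ι : Type*} [Countable ι]
    (x : ι → X) (s : ι → ℝ≥0∞) (η : Measure X) [SigmaFinite η]
    (hη : η = Measure.sum fun a : ι => s a • Measure.dirac (x a)) (I : ℕ) :
    Measure.pi (fun _ : Fin I => η)
      = Measure.sum (fun b : Fin I → ι =>
          (∏ k, s (b k)) • Measure.dirac (fun k => x (b k))) := by
  apply Measure.pi_eq
  intro t ht
  rw [Measure.sum_apply _ (MeasurableSet.univ_pi ht)]
  have key : ∀ b : Fin I → ι,
      ((∏ k, s (b k)) • Measure.dirac (fun k => x (b k))) (Set.pi Set.univ t)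
        = ∏ k, (s (b k) * (t k).indicator 1 (x (b k))) := by
    intro b
    rw [Measure.smul_apply, smul_eq_mul,
      Measure.dirac_apply' _ (MeasurableSet.univ_pi ht)]
    by_cases hb : ∀ k, x (b k) ∈ t k
    · rw [Set.indicator_of_mem (by simpa [Set.mem_univ_pi] using hb), Pi.one_apply, mul_one]
      refine Finset.prod_congr rfl fun k _ => ?_
      rw [Set.indicator_of_mem (hb k), Pi.one_apply, mul_one]
    · rw [Set.indicator_of_notMem (by simpa [Set.mem_univ_pi] using hb), mul_zero]
      obtain ⟨k0, hk0⟩ := not_forall.mp hb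
      symm
      apply Finset.prod_eq_zero (Finset.mem_univ k0)
      rw [Set.indicator_of_notMem hk0, mul_zero]
  simp_rw [key]
  rw [tsum_pi_prod_aux I fun k a => s a * (t k).indicator 1 (x a)]
  refine Finset.prod_congr rfl fun k _ => ?_
  rw [hη, Measure.sum_apply _ (ht k)]
  exact tsum_congr fun a => by
    rw [Measure.smul_apply, smul_eq_mul, Measure.dirac_apply' _ (ht k)]

/-- For a discrete measure `η = ∑_a s a · δ_{x a}` with positive weights and distinct atoms,
and a symmetric nonnegative function `g` on `Xⁿ` vanishing off the off-diagonal,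
`⟨η^{⊗I}, R_{i} g⟩ = n! ∑_{n-subsets of atoms} g(x's) ∏ s^{i}`, written here as a sum over
injective `n`-tuples of atom indices.  The interval-block structure of
`R_{i 0, ..., i (n-1)} g` is encoded by a monotone map `c : Fin I → Fin n` with fibers of
cardinalities `i j` and a section `rep`. -/
theorem pairing_of_discrete_measure_with_R
    {X : Type*} [TopologicalSpace X] [PolishSpace X] [MeasurableSpace X] [BorelSpace X]
    {ι : Type*} [Countable ι] [DecidableEq ι]
    (x : ι → X) (hx : Function.Injective x)
    (s : ι → ℝ≥0∞) (hs : ∀ a, 0 < s a) (hs' : ∀ a, s a ≠ ∞)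
    (η : Measure X) [SigmaFinite η]
    (hη : η = Measure.sum fun a : ι => s a • Measure.dirac (x a))
    (n I : ℕ) (i : Fin n → ℕ) (hi : ∀ j, 1 ≤ i j) (hI : I = ∑ j, i j)
    (c : Fin I → Fin n) (rep : Fin n → Fin I) (hmono : Monotone c)
    (hfib : ∀ j, (Finset.univ.filter fun k => c k = j).card = i j)
    (hrep : ∀ j, c (rep j) = j)
    (g : (Fin n → X) → ℝ≥0∞) (hg : Measurable g)
    (hgsym : ∀ (σ : Equiv.Perm (Fin n)) (y : Fin n → X), g (y ∘ σ) = g y)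
    (hg0 : ∀ y : Fin n → X, ¬ Function.Injective y → g y = 0) :
    ∫⁻ z : Fin I → X,
        {z : Fin I → X | ∀ k l, c k = c l → z k = z l}.indicator
          (fun z => g fun j => z (rep j)) z
      ∂(Measure.pi fun _ : Fin I => η)
    = (∑' a : Fin n → ι,
        if Function.Injective a then g (fun j => x (a j)) * ∏ j, s (a j) ^ i j else 0) := by
  set S : Set (Fin I → X) := {z : Fin I → X | ∀ k l, c k = c l → z k = z l} with hS_def
  -- measurability of the set S
  have hS : MeasurableSet S := by
    have hSeq : S = ⋂ k, ⋂ l, {z : Fin I → X | c k = c l → z k = z l} := by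
      ext z; simp [hS_def, Set.mem_iInter]
    rw [hSeq]
    refine MeasurableSet.iInter fun k => MeasurableSet.iInter fun l => ?_
    by_cases hkl : c k = c l
    · have : {z : Fin I → X | c k = c l → z k = z l} = {z : Fin I → X | z k = z l} := by
        ext z; simp [hkl]
      rw [this]
      exact MeasureTheory.StronglyMeasurable.measurableSet_eq_fun (measurable_pi_apply k).stronglyMeasurable
        (measurable_pi_apply l).stronglyMeasurable
    · have : {z : Fin I → X | c k = c l → z k = z l} = Set.univ := by
        ext z; simp [hkl]
      rw [this]; exact MeasurableSet.univ
  have hF : Measurable (S.indicator (fun z : Fin I → X => g fun j => z (rep j))) :=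
    (hg.comp (measurable_pi_lambda _ fun j => measurable_pi_apply (rep j))).indicator hS
  rw [pi_eq_sum_dirac_aux x s η hη I, lintegral_sum_measure]
  simp_rw [lintegral_smul_measure, lintegral_dirac' _ hF]
  -- reindex the sum
  set T : (Fin n → ι) → ℝ≥0∞ := fun a =>
    if Function.Injective a then g (fun j => x (a j)) * ∏ j, s (a j) ^ i j else 0 with hT_def
  set F : (Fin I → ι) → ℝ≥0∞ := fun b =>
    (∏ k, s (b k)) • S.indicator (fun z : Fin I → X => g fun j => z (rep j))
      (fun k => x (b k)) with hF_def
  show ∑' b, F b = ∑' a, T a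
  have hprod : ∀ a : Fin n → ι, (∏ k, s (a (c k))) = ∏ j, s (a j) ^ i j := by
    intro a
    rw [← Finset.prod_fiberwise_of_maps_to' (t := Finset.univ)
      (fun k _ => Finset.mem_univ (c k)) (fun j => s (a j))]
    refine Finset.prod_congr rfl fun j _ => ?_
    rw [Finset.prod_const, hfib j]
  have hcomp_mem : ∀ a : Fin n → ι, (fun k => x (a (c k))) ∈ S := by
    intro a k l hkl
    simp only [hkl]
  have hFcomp : ∀ a : Fin n → ι, Function.Injective a → F (a ∘ c) = T a := by
    intro a ha
    simp only [hF_def, hT_def, Function.comp_apply, if_pos ha, smul_eq_mul]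
    rw [Set.indicator_of_mem (hcomp_mem a)]
    have : (fun j => x (a (c (rep j)))) = fun j => x (a j) := by
      funext j; rw [hrep j]
    rw [this, hprod a, mul_comm]
  refine tsum_eq_tsum_of_ne_zero_bij (fun a => (a : Function.support T) ∘ c) ?_ ?_ ?_
  · intro a a' h
    apply Subtype.ext
    funext j
    have := congrFun h (rep j)
    simpa [hrep j] using this
  · intro b hb
    rw [Function.mem_support] at hb
    have hind : S.indicator (fun z : Fin I → X => g fun j => z (rep j))
        (fun k => x (b k)) ≠ 0 := by
      intro h0
      apply hb
      simp [hF_def, h0]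
    have hmem : (fun k => x (b k)) ∈ S := by
      by_contra hmem
      exact hind (Set.indicator_of_notMem hmem _)
    have hval : g (fun j => x (b (rep j))) ≠ 0 := by
      rwa [Set.indicator_of_mem hmem] at hind
    set a : Fin n → ι := fun j => b (rep j) with ha_def
    have hbc : b = a ∘ c := by
      funext k
      apply hx
      exact hmem k (rep (c k)) (hrep (c k)).symm
    have hainj : Function.Injective a := by
      by_contra hna
      apply hval
      apply hg0
      intro hxinj
      exact hna fun j j' hjj' => hxinj (congrArg x hjj')
    have hTa : T a ≠ 0 := by
      simp only [hT_def, if_pos hainj]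
      apply mul_ne_zero hval
      apply Finset.prod_ne_zero_iff.mpr
      intro j _
      exact pow_ne_zero _ (hs (a j)).ne'
    exact ⟨⟨a, hTa⟩, hbc.symm⟩
  · intro a
    have hainj : Function.Injective (a : Fin n → ι) := by
      by_contra hna
      exact a.2 (by simp [hT_def, if_neg hna])
    exact hFcomp a hainj
end

section
/- Let μ be a probability measure on the space of Radon measures M(X) with finite moments, and suppose its moment measures satisfy the Carleman bound M^{(n)}(Λⁿ) ≤ C_Λⁿ n! for every compact Λ. If ν is another such probability measure with the same moment measures, then μ = ν. -/
open MeasureTheory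
open scoped Nat ENNReal NNReal


noncomputable section

namespace RandomMeasureMomentAux

open MeasureTheory Complex
open scoped Nat ENNReal NNReal Topology


noncomputable def lap (ρ : Measure ℝ) (z : ℂ) : ℂ := ∫ x, Complex.exp (-(z * x)) ∂ρ

lemma xexp_le {ε x : ℝ} (hε : 0 < ε) (hx : 0 ≤ x) : x * Real.exp (-(ε * x)) ≤ 1 / ε := by
  have h1 : ε * x ≤ Real.exp (ε * x) := (Real.add_one_le_exp (ε * x)).trans' (by linarith)
  have h2 : 0 < Real.exp (ε * x) := Real.exp_pos _
  rw [Real.exp_neg, div_eq_mul_inv, mul_comm (1:ℝ)]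
  rw [mul_one, ← div_eq_mul_inv, div_le_iff₀ h2]
  calc x = ε⁻¹ * (ε * x) := by field_simp
    _ ≤ ε⁻¹ * Real.exp (ε * x) := by
        apply mul_le_mul_of_nonneg_left h1 (by positivity)

lemma lap_analytic (ρ : Measure ℝ) [IsFiniteMeasure ρ] (hρ : ∀ᵐ x ∂ρ, 0 ≤ x) :
    AnalyticOnNhd ℂ (lap ρ) {z | 0 < z.re} := by
  apply DifferentiableOn.analyticOnNhd _ (isOpen_lt continuous_const Complex.continuous_re)
  intro z₀ hz₀
  have hre : 0 < z₀.re := hz₀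
  set ε : ℝ := z₀.re / 2 with hεdef
  have hε : 0 < ε := by positivity
  have cont : ∀ z : ℂ, Continuous fun x : ℝ => Complex.exp (-(z * x)) := fun z =>
    ((continuous_const.mul Complex.continuous_ofReal).neg).cexp
  have key := hasDerivAt_integral_of_dominated_loc_of_deriv_le (μ := ρ) (x₀ := z₀)
      (F := fun z (x : ℝ) => Complex.exp (-(z * x)))
      (F' := fun z (x : ℝ) => -(x : ℂ) * Complex.exp (-(z * x)))
      (bound := fun _ => 1 / ε) (Metric.ball_mem_nhds z₀ hε)
      (Filter.Eventually.of_forall fun z => (cont z).aestronglyMeasurable)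
      ?_ (((continuous_ofReal.neg).mul (cont z₀)).aestronglyMeasurable) ?_
      (integrable_const _) ?_
  · exact key.2.differentiableAt.differentiableWithinAt
  · -- Integrable (F z₀)
    refine (integrable_const (1:ℝ)).mono' (cont z₀).aestronglyMeasurable ?_
    filter_upwards [hρ] with x hx
    rw [Complex.norm_exp]
    simp only [neg_re, mul_re, ofReal_re, ofReal_im, mul_zero, sub_zero]
    have : -(z₀.re * x) ≤ 0 := by nlinarith
    simpa using Real.exp_le_one_iff.mpr this
  · -- bound
    filter_upwards [hρ] with x hx z hz
    have hzre : ε ≤ z.re := by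
      have := (Complex.abs_re_le_norm (z - z₀))
      rw [Metric.mem_ball, Complex.dist_eq] at hz
      have : |z.re - z₀.re| < ε := by
        simpa [Complex.sub_re] using lt_of_le_of_lt (Complex.abs_re_le_norm (z - z₀)) hz
      have := abs_lt.mp this
      simp only [hεdef] at *
      linarith [this.1]
    simp only [norm_mul, Complex.norm_exp, norm_neg,
      Complex.norm_real, Real.norm_eq_abs, neg_re, mul_re, ofReal_re, ofReal_im, mul_zero, sub_zero,
      _root_.abs_of_nonneg hx]
    calc x * Real.exp (-(z.re * x)) ≤ x * Real.exp (-(ε * x)) := by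
          apply mul_le_mul_of_nonneg_left (Real.exp_le_exp.mpr (by nlinarith)) hx
      _ ≤ 1 / ε := xexp_le hε hx
  · -- differentiability
    refine Filter.Eventually.of_forall fun x => fun z _ => ?_
    have h1 : HasDerivAt (fun z : ℂ => -(z * (x:ℂ))) (-(x:ℂ)) z := by
      simpa using ((hasDerivAt_id z).mul_const (x:ℂ)).fun_neg
    simpa [mul_comm] using h1.cexp



noncomputable def M (ρ : Measure ℝ) (n : ℕ) : ℝ≥0∞ := ∫⁻ x, ENNReal.ofReal (x ^ n) ∂ρ

lemma lap_small (ρ : Measure ℝ) [IsProbabilityMeasure ρ] (hρ : ∀ᵐ x ∂ρ, 0 ≤ x) (D : ℝ≥0)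
    (hb : ∀ n : ℕ, M ρ n ≤ (D : ℝ≥0∞) ^ n * (n ! : ℝ≥0∞))
    {s : ℝ} (hs0 : 0 < s) (hs : s * (D : ℝ) < 1) :
    lap ρ (s : ℂ) = ∑' n : ℕ, ((-(s : ℂ)) ^ n / (n ! : ℂ)) * ((M ρ n).toReal : ℂ) := by
  classical
  set f : ℕ → ℝ → ℂ := fun n x => (-((s : ℂ) * (x : ℂ))) ^ n / (n ! : ℂ) with hf
  have hmeas : ∀ n, AEStronglyMeasurable (f n) ρ := by
    intro n
    apply Continuous.aestronglyMeasurable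
    exact (((continuous_const.mul Complex.continuous_ofReal).neg.pow n).div_const _)
  have hMfin : ∀ n, M ρ n ≠ ⊤ := fun n =>
    ((hb n).trans_lt (ENNReal.mul_lt_top (by simp [ENNReal.pow_lt_top]) (by simp))).ne
  have hnorm : ∀ n : ℕ, ∫⁻ x, ‖f n x‖₊ ∂ρ ≤ ENNReal.ofReal ((s * D) ^ n) := by
    intro n
    have h1 : ∫⁻ x, ‖f n x‖₊ ∂ρ = ENNReal.ofReal (s ^ n / n !) * M ρ n := by
      rw [M, ← lintegral_const_mul _ (by measurability)]
      apply lintegral_congr_ae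
      filter_upwards [hρ] with x hx
      rw [← ENNReal.ofReal_mul (by positivity), ← enorm_eq_nnnorm, ← ofReal_norm]
      congr 1
      rw [hf]
      simp only [norm_div, norm_pow, norm_neg, norm_mul, Complex.norm_real,
        Real.norm_eq_abs, Complex.norm_natCast]
      rw [mul_pow, _root_.abs_of_nonneg hs0.le, _root_.abs_of_nonneg hx]
      ring
    rw [h1]
    calc ENNReal.ofReal (s ^ n / n !) * M ρ n
        ≤ ENNReal.ofReal (s ^ n / n !) * ((D : ℝ≥0∞) ^ n * (n ! : ℝ≥0∞)) := by
          gcongr; exact hb n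
      _ = ENNReal.ofReal ((s * D) ^ n) := by
          rw [← ENNReal.ofReal_coe_nnreal, ← ENNReal.ofReal_pow (by positivity),
            ← ENNReal.ofReal_natCast (n !), ← ENNReal.ofReal_mul (by positivity),
            ← ENNReal.ofReal_mul (by positivity)]
          congr 1
          have : (0:ℝ) < n ! := by positivity
          field_simp
          ring
  have hsum : (∑' n : ℕ, ∫⁻ x, ‖f n x‖₊ ∂ρ) ≠ ⊤ := by
    apply ne_top_of_le_ne_top _ (ENNReal.tsum_le_tsum hnorm)
    have h2 : ∀ n : ℕ, ENNReal.ofReal ((s * D) ^ n) = ENNReal.ofReal (s * D) ^ n := fun n =>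
      ENNReal.ofReal_pow (by positivity) n
    simp_rw [h2]
    rw [ENNReal.tsum_geometric]
    apply ENNReal.inv_ne_top.mpr
    simp only [ne_eq, tsub_eq_zero_iff_le, not_le]
    exact ENNReal.ofReal_lt_one.mpr hs
  have key := integral_tsum hmeas hsum
  have hexp : ∀ x : ℝ, Complex.exp (-((s : ℂ) * x)) = ∑' n : ℕ, f n x := by
    intro x
    rw [Complex.exp_eq_exp_ℂ, NormedSpace.exp_eq_tsum_div]
  have hlap : lap ρ (s : ℂ) = ∫ x, ∑' n, f n x ∂ρ := by
    rw [lap]; congr 1; ext x; exact hexp x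
  rw [hlap, key]
  congr 1
  ext n
  have h3 : ∀ x : ℝ, f n x = ((-(s:ℂ)) ^ n / (n ! : ℂ)) * ((x ^ n : ℝ) : ℂ) := by
    intro x
    rw [hf]
    push_cast
    ring
  simp_rw [h3]
  have h4 : ∫ (a : ℝ), ((a ^ n : ℝ) : ℂ) ∂ρ = ((∫ a, a ^ n ∂ρ : ℝ) : ℂ) :=
    integral_ofReal
  rw [integral_const_mul, h4]
  congr 2
  rw [integral_eq_lintegral_of_nonneg_ae (by filter_upwards [hρ] with x hx; positivity)
    (by apply Continuous.aestronglyMeasurable; continuity)]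
  rfl



theorem laplace_point_eq (ρ₁ ρ₂ : Measure ℝ) [IsProbabilityMeasure ρ₁] [IsProbabilityMeasure ρ₂]
    (h₁ : ∀ᵐ x ∂ρ₁, 0 ≤ x) (h₂ : ∀ᵐ x ∂ρ₂, 0 ≤ x) (D : ℝ≥0)
    (hb₁ : ∀ n : ℕ, M ρ₁ n ≤ (D : ℝ≥0∞) ^ n * (n ! : ℝ≥0∞))
    (hb₂ : ∀ n : ℕ, M ρ₂ n ≤ (D : ℝ≥0∞) ^ n * (n ! : ℝ≥0∞))
    (hm : ∀ n : ℕ, M ρ₁ n = M ρ₂ n) :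
    ∫ x, Real.exp (-x) ∂ρ₁ = ∫ x, Real.exp (-x) ∂ρ₂ := by
  set s₀ : ℝ := 1 / (2 * ((D : ℝ) + 1)) with hs₀def
  have hD0 : (0:ℝ) ≤ D := D.coe_nonneg
  have hs₀pos : 0 < s₀ := by positivity
  have hsmall : ∀ t : ℝ, 0 < t → t < s₀ → lap ρ₁ (t : ℂ) = lap ρ₂ (t : ℂ) := by
    intro t ht0 hts
    have htD : t * (D : ℝ) < 1 := by
      have h1 : t * (D : ℝ) ≤ t * ((D : ℝ) + 1) := by nlinarith
      have h2 : t * ((D : ℝ) + 1) < s₀ * ((D : ℝ) + 1) := by nlinarith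
      have h3 : s₀ * ((D : ℝ) + 1) = 1 / 2 := by rw [hs₀def]; field_simp
      linarith
    rw [lap_small ρ₁ h₁ D hb₁ ht0 htD, lap_small ρ₂ h₂ D hb₂ ht0 htD]
    simp_rw [hm]
  -- identity theorem
  set U : Set ℂ := {z | 0 < z.re} with hU
  have hUopen : IsOpen U := isOpen_lt continuous_const Complex.continuous_re
  have hUconn : IsPreconnected U := (convex_halfSpace_re_gt 0).isPreconnected
  set c : ℂ := ((s₀ / 2 : ℝ) : ℂ) with hc
  have hcU : c ∈ U := by simp [hU, hc, Complex.ofReal_re]; positivity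
  have hfreq : ∃ᶠ z in 𝓝[≠] c, lap ρ₁ z = lap ρ₂ z := by
    set u : ℕ → ℂ := fun n => ((s₀ / 2 + s₀ / (n + 3) : ℝ) : ℂ) with hu
    have hreal : Filter.Tendsto (fun n : ℕ => s₀ / 2 + s₀ / (n + 3)) Filter.atTop
        (nhds (s₀ / 2)) := by
      have : Filter.Tendsto (fun n : ℕ => s₀ / (n + 3)) Filter.atTop (nhds 0) := by
        apply Filter.Tendsto.div_atTop tendsto_const_nhds
        apply Filter.tendsto_atTop_add_const_right
        exact tendsto_natCast_atTop_atTop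
      simpa using tendsto_const_nhds.add this
    have htend : Filter.Tendsto u Filter.atTop (𝓝[≠] c) := by
      rw [tendsto_nhdsWithin_iff]
      constructor
      · exact (Complex.continuous_ofReal.tendsto _).comp hreal
      · apply Filter.Eventually.of_forall
        intro n
        simp only [hu, hc, Set.mem_compl_iff, Set.mem_singleton_iff, ne_eq]
        intro hcontra
        have := Complex.ofReal_injective hcontra
        have hpos : 0 < s₀ / (n + 3) := by positivity
        linarith
    apply htend.frequently
    apply Filter.Frequently.of_forall
    intro n
    apply hsmall
    · positivity
    · have hn3 : (3:ℝ) ≤ (n : ℝ) + 3 := by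
        have := Nat.cast_nonneg (α := ℝ) n
        linarith
      have h1 : s₀ / ((n : ℝ) + 3) ≤ s₀ / 3 := by gcongr
      nlinarith
  have heqOn := (lap_analytic ρ₁ h₁).eqOn_of_preconnected_of_frequently_eq
      (lap_analytic ρ₂ h₂) hUconn hcU hfreq
  have h1U : (1 : ℂ) ∈ U := by simp [hU]
  have hlap1 : ∀ ρ : Measure ℝ, lap ρ 1 = ((∫ x, Real.exp (-x) ∂ρ : ℝ) : ℂ) := by
    intro ρ
    calc ∫ x, Complex.exp (-(1 * (x:ℂ))) ∂ρ = ∫ x, ((Real.exp (-x) : ℝ) : ℂ) ∂ρ := by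
          congr 1; ext x; rw [Complex.ofReal_exp]; norm_num
      _ = ((∫ x, Real.exp (-x) ∂ρ : ℝ) : ℂ) := integral_ofReal
  have := heqOn h1U
  rw [hlap1 ρ₁, hlap1 ρ₂] at this
  exact_mod_cast this



variable {ι : Type*} [Fintype ι]

abbrev Cube (ι : Type*) := ι → Set.Icc (0:ℝ) 1

noncomputable def coordFn (p : ι) : C(Cube ι, ℝ) :=
  ⟨fun x => (x p : ℝ), (continuous_subtype_val.comp (continuous_apply p))⟩

lemma cm_integrable (τ : Measure (Cube ι)) [IsFiniteMeasure τ] (g : C(Cube ι, ℝ)) :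
    Integrable (fun x => g x) τ := by
  have := (BoundedContinuousFunction.mkOfCompact g).integrable τ
  exact this

theorem integral_eq_of_monomials (τ₁ τ₂ : Measure (Cube ι))
    [IsProbabilityMeasure τ₁] [IsProbabilityMeasure τ₂]
    (h : ∀ m : ι → ℕ, ∫ x, ∏ p, ((x p : ℝ)) ^ m p ∂τ₁ = ∫ x, ∏ p, ((x p : ℝ)) ^ m p ∂τ₂)
    (g : C(Cube ι, ℝ)) : ∫ x, g x ∂τ₁ = ∫ x, g x ∂τ₂ := by
  classical
  set A : Subalgebra ℝ C(Cube ι, ℝ) := Algebra.adjoin ℝ (Set.range (coordFn (ι := ι))) with hA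
  have hsep : A.SeparatesPoints := by
    intro x y hxy
    obtain ⟨p, hp⟩ := Function.ne_iff.mp hxy
    refine ⟨coordFn p, ⟨coordFn p, Algebra.subset_adjoin (Set.mem_range_self p), rfl⟩, ?_⟩
    simpa [coordFn] using fun hc => hp (Subtype.ext hc)
  have hcl : A.topologicalClosure = ⊤ :=
    ContinuousMap.subalgebra_topologicalClosure_eq_top_of_separatesPoints A hsep
  set Z : Set C(Cube ι, ℝ) := {g | ∫ x, g x ∂τ₁ = ∫ x, g x ∂τ₂} with hZ
  have hZclosed : IsClosed Z := by
    have hlip : ∀ τ : Measure (Cube ι), IsProbabilityMeasure τ →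
        LipschitzWith 1 (fun g : C(Cube ι, ℝ) => ∫ x, g x ∂τ) := by
      intro τ hτ
      apply LipschitzWith.of_dist_le_mul
      intro g₁ g₂
      rw [dist_eq_norm, ← integral_sub (cm_integrable τ g₁) (cm_integrable τ g₂)]
      calc ‖∫ x, (g₁ x - g₂ x) ∂τ‖ ≤ dist g₁ g₂ * (τ Set.univ).toReal := by
            apply norm_integral_le_of_norm_le_const
            apply Filter.Eventually.of_forall
            intro x
            rw [Real.norm_eq_abs, ← Real.dist_eq]
            exact ContinuousMap.dist_apply_le_dist x
        _ = 1 * dist g₁ g₂ := by simp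
    have h1 := (hlip τ₁ inferInstance).continuous
    have h2 := (hlip τ₂ inferInstance).continuous
    have : Z = (fun g : C(Cube ι, ℝ) =>
        (∫ x, g x ∂τ₁) - ∫ x, g x ∂τ₂) ⁻¹' {0} := by
      ext g; simp [hZ, sub_eq_zero]
    rw [this]
    exact IsClosed.preimage (h1.sub h2) isClosed_singleton
  have hAZ : (A : Set C(Cube ι, ℝ)) ⊆ Z := by
    intro g hg
    have hg' : g ∈ Submodule.span ℝ
        ((Submonoid.closure (Set.range (coordFn (ι := ι))) : Submonoid C(Cube ι, ℝ)) :
          Set C(Cube ι, ℝ)) := by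
      have := Algebra.adjoin_eq_span (R := ℝ) (s := Set.range (coordFn (ι := ι)))
      rw [← hA] at this
      have hmem : g ∈ Subalgebra.toSubmodule A := hg
      rw [this] at hmem
      exact hmem
    refine Submodule.span_induction ?_ ?_ ?_ ?_ hg'
    · -- monomials
      intro u hu
      have hrep : ∃ m : ι → ℕ, u = ∏ p, coordFn p ^ m p := by
        refine Submonoid.closure_induction ?_ ?_ ?_ hu
        · rintro _ ⟨p, rfl⟩
          refine ⟨Pi.single p 1, ?_⟩
          rw [Finset.prod_eq_single p (fun q _ hq => by simp [Pi.single_eq_of_ne hq])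
            (by simp)]
          simp
        · exact ⟨0, by simp⟩
        · rintro a b _ _ ⟨ma, rfl⟩ ⟨mb, rfl⟩
          exact ⟨ma + mb, by simp [pow_add, Finset.prod_mul_distrib]⟩
      obtain ⟨m, rfl⟩ := hrep
      have hev : ∀ x : Cube ι, (∏ p, coordFn p ^ m p) x = ∏ p, ((x p : ℝ)) ^ m p := by
        intro x
        simp [coordFn]
      simp only [hZ, Set.mem_setOf_eq]
      calc ∫ x, (∏ p, coordFn p ^ m p) x ∂τ₁ = ∫ x, ∏ p, ((x p : ℝ)) ^ m p ∂τ₁ := by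
            simp_rw [hev]
        _ = ∫ x, ∏ p, ((x p : ℝ)) ^ m p ∂τ₂ := h m
        _ = ∫ x, (∏ p, coordFn p ^ m p) x ∂τ₂ := by simp_rw [hev]
    · simp [hZ]
    · intro a b _ _ ha hb
      simp only [hZ, Set.mem_setOf_eq, ContinuousMap.add_apply] at *
      rw [integral_add (cm_integrable τ₁ a) (cm_integrable τ₁ b),
        integral_add (cm_integrable τ₂ a) (cm_integrable τ₂ b), ha, hb]
    · intro r a _ ha
      simp only [hZ, Set.mem_setOf_eq, ContinuousMap.smul_apply] at *
      rw [integral_smul, integral_smul, ha]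
  have hgZ : g ∈ Z := by
    have h1 : g ∈ closure (A : Set C(Cube ι, ℝ)) := by
      have : (A.topologicalClosure : Set C(Cube ι, ℝ)) = closure (A : Set C(Cube ι, ℝ)) := rfl
      rw [← this, hcl]
      trivial
    exact closure_minimal hAZ hZclosed h1
  exact hgZ

theorem cube_meas_eq (τ₁ τ₂ : Measure (Cube ι))
    [IsProbabilityMeasure τ₁] [IsProbabilityMeasure τ₂]
    (h : ∀ m : ι → ℕ, ∫ x, ∏ p, ((x p : ℝ)) ^ m p ∂τ₁ = ∫ x, ∏ p, ((x p : ℝ)) ^ m p ∂τ₂) :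
    τ₁ = τ₂ := by
  apply ext_of_forall_lintegral_eq_of_IsFiniteMeasure
  intro f
  have key : ∀ τ : Measure (Cube ι), IsProbabilityMeasure τ →
      ∫⁻ x, (f x : ℝ≥0∞) ∂τ = ENNReal.ofReal (∫ x, ((f x : ℝ≥0) : ℝ) ∂τ) := by
    intro τ hτ
    rw [lintegral_coe_eq_integral]
    exact cm_integrable τ ⟨fun x => ((f x : ℝ≥0) : ℝ), NNReal.continuous_coe.comp f.continuous⟩
  rw [key τ₁ inferInstance, key τ₂ inferInstance]
  congr 1
  exact integral_eq_of_monomials τ₁ τ₂ h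
    ⟨fun x => ((f x : ℝ≥0) : ℝ), NNReal.continuous_coe.comp f.continuous⟩



lemma lintegral_pow_sum_eq {X : Type*} [MeasurableSpace X]
    (μ ν : Measure (Measure X))
    (heq : ∀ (n : ℕ) (A : Fin n → Set X), (∀ j, MeasurableSet (A j)) →
      ∫⁻ η, ∏ j, η (A j) ∂μ = ∫⁻ η, ∏ j, η (A j) ∂ν)
    {ι : Type*} [Fintype ι] (A : ι → Set X) (hA : ∀ p, MeasurableSet (A p))
    (m : ι → ℕ) (n : ℕ) :
    ∫⁻ η, (∑ p, (m p : ℝ≥0∞) * η (A p)) ^ n ∂μ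
      = ∫⁻ η, (∑ p, (m p : ℝ≥0∞) * η (A p)) ^ n ∂ν := by
  classical
  have hexp : ∀ η : Measure X, (∑ p, (m p : ℝ≥0∞) * η (A p)) ^ n
      = ∑ g : Fin n → ι, (∏ j, (m (g j) : ℝ≥0∞)) * ∏ j, η (A (g j)) := by
    intro η
    have hpow : (∑ p : ι, (m p : ℝ≥0∞) * η (A p)) ^ n
        = ∏ _j : Fin n, (∑ p : ι, (m p : ℝ≥0∞) * η (A p)) := by
      rw [Finset.prod_const, Finset.card_univ, Fintype.card_fin]
    rw [hpow, Finset.prod_univ_sum, Fintype.piFinset_univ]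
    apply Finset.sum_congr rfl
    intro g _
    rw [Finset.prod_mul_distrib]
  have key : ∀ ξ : Measure (Measure X), ∫⁻ η, (∑ p, (m p : ℝ≥0∞) * η (A p)) ^ n ∂ξ
      = ∑ g : Fin n → ι, (∏ j, (m (g j) : ℝ≥0∞)) * ∫⁻ η, ∏ j, η (A (g j)) ∂ξ := by
    intro ξ
    simp_rw [hexp]
    rw [lintegral_finset_sum]
    · apply Finset.sum_congr rfl
      intro g _
      rw [lintegral_const_mul]
      exact Finset.measurable_prod _ fun j _ => Measure.measurable_coe (hA (g j))
    · intro g _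
      exact (Finset.measurable_prod _ fun j _ =>
        Measure.measurable_coe (hA (g j))).const_mul _
  rw [key μ, key ν]
  apply Finset.sum_congr rfl
  intro g _
  rw [heq n (fun j => A (g j)) (fun j => hA (g j))]


end RandomMeasureMomentAux


namespace RandomMeasureMomentAux.Step3

variable {X : Type*} [TopologicalSpace X] [LocallyCompactSpace X] [PolishSpace X]
  [MeasurableSpace X] [BorelSpace X]

open RandomMeasureMomentAux

lemma measure_constraint_eq
    (μ ν : Measure (Measure X)) [IsProbabilityMeasure μ] [IsProbabilityMeasure ν]
    (hμrad : ∀ᵐ η ∂μ, ∀ Λ : Set X, IsCompact Λ → η Λ < ∞)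
    (hνrad : ∀ᵐ η ∂ν, ∀ Λ : Set X, IsCompact Λ → η Λ < ∞)
    (hC : ∀ Λ : Set X, IsCompact Λ → ∃ C : ℝ≥0, ∀ n : ℕ,
      ∫⁻ η, (η Λ) ^ n ∂μ ≤ (C : ℝ≥0∞) ^ n * (n ! : ℝ≥0∞))
    (heq : ∀ (n : ℕ) (A : Fin n → Set X), (∀ j, MeasurableSet (A j)) →
      ∫⁻ η, ∏ j, η (A j) ∂μ = ∫⁻ η, ∏ j, η (A j) ∂ν)
    (F : Finset (Set X × ℝ≥0))
    (hF : ∀ p ∈ F, MeasurableSet p.1 ∧ ∃ L, IsCompact L ∧ p.1 ⊆ L) :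
    μ {η | ∀ p ∈ F, η p.1 ≤ (p.2 : ℝ≥0∞)} = ν {η | ∀ p ∈ F, η p.1 ≤ (p.2 : ℝ≥0∞)} := by
  classical
  set ι := {p : Set X × ℝ≥0 // p ∈ F} with hι
  haveI : Fintype ι := FinsetCoe.fintype F
  set A : ι → Set X := fun p => p.1.1 with hAdef
  set c : ι → ℝ≥0 := fun p => p.1.2 with hcdef
  have hAm : ∀ p : ι, MeasurableSet (A p) := fun p => (hF p.1 p.2).1
  set L : ι → Set X := fun p => Classical.choose (hF p.1 p.2).2 with hLdef
  have hLc : ∀ p : ι, IsCompact (L p) := fun p => (Classical.choose_spec (hF p.1 p.2).2).1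
  have hLsub : ∀ p : ι, A p ⊆ L p := fun p => (Classical.choose_spec (hF p.1 p.2).2).2
  set Λ : Set X := ⋃ p : ι, L p with hΛdef
  have hΛc : IsCompact Λ := isCompact_iUnion hLc
  have hAΛ : ∀ p : ι, A p ⊆ Λ := fun p => (hLsub p).trans (Set.subset_iUnion L p)
  obtain ⟨C, hCb⟩ := hC Λ hΛc
  -- the map into the cube
  have hΦaux : ∀ (η : Measure X) (p : ι),
      Real.exp (-(η (A p)).toReal) ∈ Set.Icc (0:ℝ) 1 := by
    intro η p
    constructor
    · exact (Real.exp_pos _).le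
    · apply Real.exp_le_one_iff.mpr
      simp [ENNReal.toReal_nonneg]
  set Φ : Measure X → Cube ι := fun η p => ⟨Real.exp (-(η (A p)).toReal), hΦaux η p⟩ with hΦdef
  have hcoordmeas : ∀ p : ι, Measurable fun η : Measure X => Real.exp (-(η (A p)).toReal) :=
    fun p => Real.continuous_exp.measurable.comp
      ((Measure.measurable_coe (hAm p)).ennreal_toReal.neg)
  have hΦ : Measurable Φ := by
    apply measurable_pi_lambda
    intro p
    exact (hcoordmeas p).subtype_mk
  haveI : IsProbabilityMeasure (μ.map Φ) := Measure.isProbabilityMeasure_map hΦ.aemeasurable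
  haveI : IsProbabilityMeasure (ν.map Φ) := Measure.isProbabilityMeasure_map hΦ.aemeasurable
  -- the pushforwards agree
  have key : μ.map Φ = ν.map Φ := by
    apply cube_meas_eq
    intro m
    set w : Measure X → ℝ := fun η => ∑ p : ι, (m p : ℝ) * (η (A p)).toReal with hwdef
    have hw : Measurable w :=
      Finset.measurable_sum _ fun p _ =>
        ((Measure.measurable_coe (hAm p)).ennreal_toReal).const_mul _
    set W : Measure X → ℝ≥0∞ := fun η => ∑ p : ι, (m p : ℝ≥0∞) * η (A p) with hWdef
    have hWmeas : Measurable W :=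
      Finset.measurable_sum _ fun p _ => (Measure.measurable_coe (hAm p)).const_mul _
    -- monomial integrals are Laplace values
    have hmono : ∀ ξ : Measure (Measure X),
        ∫ x, ∏ p : ι, ((x p : ℝ)) ^ m p ∂(ξ.map Φ) = ∫ x, Real.exp (-x) ∂(ξ.map w) := by
      intro ξ
      have hc1 : Continuous fun x : Cube ι => ∏ p : ι, ((x p : ℝ)) ^ m p :=
        continuous_finset_prod _ fun p _ =>
          (continuous_subtype_val.comp (continuous_apply p)).pow _
      have h1 : ∫ x, ∏ p : ι, ((x p : ℝ)) ^ m p ∂(ξ.map Φ)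
          = ∫ η, ∏ p : ι, (Real.exp (-(η (A p)).toReal)) ^ m p ∂ξ :=
        integral_map hΦ.aemeasurable hc1.aestronglyMeasurable
      have h2 : ∫ x, Real.exp (-x) ∂(ξ.map w) = ∫ η, Real.exp (-(w η)) ∂ξ :=
        integral_map hw.aemeasurable
          (Real.continuous_exp.comp continuous_neg).aestronglyMeasurable
      rw [h1, h2]
      apply integral_congr_ae
      apply Filter.Eventually.of_forall
      intro η
      simp only [hwdef]
      have hsum : ∑ p : ι, (m p : ℝ) * -((η (A p)).toReal)
          = -(∑ p : ι, (m p : ℝ) * (η (A p)).toReal) := by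
        rw [← Finset.sum_neg_distrib]
        exact Finset.sum_congr rfl fun p _ => by ring
      rw [← hsum, Real.exp_sum]
      apply Finset.prod_congr rfl
      intro p _
      rw [← Real.exp_nat_mul]
    rw [hmono μ, hmono ν]
    -- now apply the one-dimensional result
    set N : ℕ := ∑ p : ι, m p with hNdef
    have hae : ∀ (ξ : Measure (Measure X)), (∀ᵐ η ∂ξ, ∀ Λ' : Set X, IsCompact Λ' → η Λ' < ∞) →
        (∀ᵐ η ∂ξ, ∀ n : ℕ, ENNReal.ofReal (w η ^ n) = (W η) ^ n) := by
      intro ξ hrad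
      filter_upwards [hrad] with η hη
      have hfin : ∀ p : ι, η (A p) ≠ ⊤ :=
        fun p => ((measure_mono (hLsub p)).trans_lt (hη (L p) (hLc p))).ne
      have hterm : ∀ p : ι, ((m p : ℝ≥0∞) * η (A p)) < ⊤ := fun p =>
        ENNReal.mul_lt_top (ENNReal.natCast_lt_top _) (lt_top_iff_ne_top.mpr (hfin p))
      have hWfin : W η ≠ ⊤ := by
        have : W η < ⊤ := ENNReal.sum_lt_top.mpr fun p _ => hterm p
        exact this.ne
      have hwW : w η = (W η).toReal := by
        rw [hwdef, hWdef, ENNReal.toReal_sum]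
        · apply Finset.sum_congr rfl
          intro p _
          rw [ENNReal.toReal_mul, ENNReal.toReal_natCast]
        · intro p _
          exact (hterm p).ne
      intro n
      rw [hwW, ← ENNReal.toReal_pow, ENNReal.ofReal_toReal (ENNReal.pow_ne_top hWfin)]
    have hMW : ∀ (ξ : Measure (Measure X)), (∀ᵐ η ∂ξ, ∀ Λ' : Set X, IsCompact Λ' → η Λ' < ∞) →
        ∀ n : ℕ, M (ξ.map w) n = ∫⁻ η, (W η) ^ n ∂ξ := by
      intro ξ hrad n
      rw [M, lintegral_map (f := fun x : ℝ => ENNReal.ofReal (x ^ n))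
        ((measurable_id.pow_const n).ennreal_ofReal) hw]
      apply lintegral_congr_ae
      filter_upwards [hae ξ hrad] with η hη
      exact hη n
    have hWbound : ∀ n : ℕ, ∫⁻ η, (W η) ^ n ∂μ ≤ ((N * C : ℝ≥0) : ℝ≥0∞) ^ n * (n ! : ℝ≥0∞) := by
      intro n
      have hWle : ∀ η : Measure X, W η ≤ (N : ℝ≥0∞) * η Λ := by
        intro η
        rw [hWdef, hNdef]
        calc ∑ p : ι, (m p : ℝ≥0∞) * η (A p) ≤ ∑ p : ι, (m p : ℝ≥0∞) * η Λ := by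
              apply Finset.sum_le_sum
              intro p _
              exact mul_le_mul_right (measure_mono (hAΛ p)) _
          _ = ((∑ p : ι, m p : ℕ) : ℝ≥0∞) * η Λ := by
              rw [Nat.cast_sum, Finset.sum_mul]
      calc ∫⁻ η, (W η) ^ n ∂μ ≤ ∫⁻ η, ((N : ℝ≥0∞) * η Λ) ^ n ∂μ := by
            apply lintegral_mono
            intro η
            exact pow_le_pow_left' (hWle η) n
        _ = (N : ℝ≥0∞) ^ n * ∫⁻ η, (η Λ) ^ n ∂μ := by
            simp_rw [mul_pow]
            rw [lintegral_const_mul _ ((Measure.measurable_coe hΛc.measurableSet).pow_const n)]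
        _ ≤ (N : ℝ≥0∞) ^ n * ((C : ℝ≥0∞) ^ n * (n ! : ℝ≥0∞)) := by
            gcongr
            exact hCb n
        _ = ((N * C : ℝ≥0) : ℝ≥0∞) ^ n * (n ! : ℝ≥0∞) := by
            push_cast
            ring
    have hWeq : ∀ n : ℕ, ∫⁻ η, (W η) ^ n ∂μ = ∫⁻ η, (W η) ^ n ∂ν := by
      intro n
      exact lintegral_pow_sum_eq μ ν heq A hAm m n
    haveI : IsProbabilityMeasure (μ.map w) := Measure.isProbabilityMeasure_map hw.aemeasurable
    haveI : IsProbabilityMeasure (ν.map w) := Measure.isProbabilityMeasure_map hw.aemeasurable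
    apply laplace_point_eq (μ.map w) (ν.map w) ?_ ?_ (N * C)
    · intro n
      rw [hMW μ hμrad n]
      exact hWbound n
    · intro n
      rw [hMW ν hνrad n, ← hWeq n]
      exact hWbound n
    · intro n
      rw [hMW μ hμrad n, hMW ν hνrad n]
      exact hWeq n
    · rw [(ae_map_iff hw.aemeasurable measurableSet_Ici : _)]
      apply Filter.Eventually.of_forall
      intro η
      apply Finset.sum_nonneg
      intro p _
      positivity
    · rw [(ae_map_iff hw.aemeasurable measurableSet_Ici : _)]
      apply Filter.Eventually.of_forall
      intro η
      apply Finset.sum_nonneg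
      intro p _
      positivity
  -- conclude
  set T : Set (Cube ι) := {x | ∀ p : ι, Real.exp (-(c p : ℝ)) ≤ (x p : ℝ)} with hTdef
  have hT : MeasurableSet T := by
    have : T = ⋂ p : ι, (fun x : Cube ι => (x p : ℝ)) ⁻¹' Set.Ici (Real.exp (-(c p : ℝ))) := by
      ext x; simp [hTdef, Set.mem_iInter]
    rw [this]
    exact MeasurableSet.iInter fun p =>
      (measurable_subtype_coe.comp (measurable_pi_apply p)) measurableSet_Ici
  have hS : ∀ ξ : Measure (Measure X), (∀ᵐ η ∂ξ, ∀ Λ' : Set X, IsCompact Λ' → η Λ' < ∞) →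
      ξ {η | ∀ p ∈ F, η p.1 ≤ (p.2 : ℝ≥0∞)} = (ξ.map Φ) T := by
    intro ξ hrad
    rw [Measure.map_apply hΦ hT]
    apply measure_congr
    rw [Filter.eventuallyEq_set]
    filter_upwards [hrad] with η hη
    have hfin : ∀ p : ι, η (A p) ≠ ⊤ :=
      fun p => ((measure_mono (hLsub p)).trans_lt (hη (L p) (hLc p))).ne
    have hiff : ∀ p : ι, (η (A p) ≤ ((c p : ℝ≥0) : ℝ≥0∞) ↔
        Real.exp (-(c p : ℝ)) ≤ Real.exp (-(η (A p)).toReal)) := by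
      intro p
      rw [Real.exp_le_exp, neg_le_neg_iff]
      rw [← ENNReal.toReal_le_toReal (hfin p) ENNReal.coe_ne_top, ENNReal.coe_toReal]
    constructor
    · intro h p
      exact (hiff p).mp (h p.1 p.2)
    · intro h p hp
      exact (hiff ⟨p, hp⟩).mpr (h ⟨p, hp⟩)
  rw [hS μ hμrad, hS ν hνrad, key]

end RandomMeasureMomentAux.Step3

namespace RandomMeasureMomentAux.Step4

variable {X : Type*} [TopologicalSpace X] [LocallyCompactSpace X] [PolishSpace X]
  [MeasurableSpace X] [BorelSpace X]

open RandomMeasureMomentAux RandomMeasureMomentAux.Step3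

theorem final
    (μ ν : Measure (Measure X)) [IsProbabilityMeasure μ] [IsProbabilityMeasure ν]
    (hμrad : ∀ᵐ η ∂μ, ∀ Λ : Set X, IsCompact Λ → η Λ < ∞)
    (hνrad : ∀ᵐ η ∂ν, ∀ Λ : Set X, IsCompact Λ → η Λ < ∞)
    (hC : ∀ Λ : Set X, IsCompact Λ → ∃ C : ℝ≥0, ∀ n : ℕ,
      ∫⁻ η, (η Λ) ^ n ∂μ ≤ (C : ℝ≥0∞) ^ n * (n ! : ℝ≥0∞))
    (heq : ∀ (n : ℕ) (A : Fin n → Set X), (∀ j, MeasurableSet (A j)) →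
      ∫⁻ η, ∏ j, η (A j) ∂μ = ∫⁻ η, ∏ j, η (A j) ∂ν) :
    μ = ν := by
  classical
  set P : Set (Set (Measure X)) := {S | ∃ F : Finset (Set X × ℝ≥0),
    (∀ p ∈ F, MeasurableSet p.1 ∧ ∃ L, IsCompact L ∧ p.1 ⊆ L) ∧
    S = {η | ∀ p ∈ F, η p.1 ≤ (p.2 : ℝ≥0∞)}} with hP
  have hpi : IsPiSystem P := by
    rintro S₁ ⟨F₁, hF₁, rfl⟩ S₂ ⟨F₂, hF₂, rfl⟩ _
    refine ⟨F₁ ∪ F₂, ?_, ?_⟩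
    · intro p hp
      rcases Finset.mem_union.mp hp with h | h
      exacts [hF₁ p h, hF₂ p h]
    · ext η
      simp only [Set.mem_inter_iff, Set.mem_setOf_eq, Finset.mem_union]
      constructor
      · intro h p hp
        rcases hp with h' | h'
        exacts [h.1 p h', h.2 p h']
      · intro h
        exact ⟨fun p hp => h p (Or.inl hp), fun p hp => h p (Or.inr hp)⟩
  set K : CompactExhaustion X := CompactExhaustion.choice X with hK
  have hgen : (inferInstance : MeasurableSpace (Measure X)) = MeasurableSpace.generateFrom P := by
    apply le_antisymm
    · have hid : @Measurable (Measure X) (Measure X)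
          (MeasurableSpace.generateFrom P) inferInstance id := by
        apply @Measure.measurable_of_measurable_coe _ _ _ (MeasurableSpace.generateFrom P)
        intro s hs
        have hcup : (fun η : Measure X => η s) = fun η => ⨆ n, η (s ∩ K n) := by
          ext η
          have hmonoK : Monotone fun n => s ∩ K n := fun a b hab =>
            Set.inter_subset_inter_right s (K.subset hab)
          rw [← Directed.measure_iUnion (hmonoK.directed_le)]
          congr 1
          rw [← Set.inter_iUnion, K.iUnion_eq, Set.inter_univ]
        simp only [id_eq]
        rw [hcup]
        apply Measurable.iSup
        intro n
        apply measurable_of_Iic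
        intro x
        by_cases hx : x = ⊤
        · have : (fun η : Measure X => η (s ∩ K n)) ⁻¹' Set.Iic x = Set.univ := by
            ext η; simp [hx]
          rw [this]
          exact MeasurableSet.univ
        · apply MeasurableSpace.measurableSet_generateFrom
          refine ⟨{(s ∩ K n, x.toNNReal)}, ?_, ?_⟩
          · intro p hp
            rw [Finset.mem_singleton] at hp
            subst hp
            exact ⟨hs.inter (K.isCompact n).isClosed.measurableSet,
              ⟨K n, K.isCompact n, Set.inter_subset_right⟩⟩
          · ext η
            simp [ENNReal.coe_toNNReal hx]
      intro t ht
      exact hid ht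
    · apply MeasurableSpace.generateFrom_le
      rintro S ⟨F, hF, rfl⟩
      have : {η : Measure X | ∀ p ∈ F, η p.1 ≤ (p.2 : ℝ≥0∞)}
          = ⋂ p ∈ F, (fun η : Measure X => η p.1) ⁻¹' Set.Iic (p.2 : ℝ≥0∞) := by
        ext η; simp [Set.mem_iInter]
      rw [this]
      exact MeasurableSet.biInter F.countable_toSet fun p hp =>
        (Measure.measurable_coe (hF p hp).1) measurableSet_Iic
  apply MeasureTheory.ext_of_generate_finite P hgen hpi
  · rintro S ⟨F, hF, rfl⟩
    exact measure_constraint_eq μ ν hμrad hνrad hC heq F hF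
  · simp

end RandomMeasureMomentAux.Step4

end

/-- A random measure (probability measure on the space of Radon measures on a locally compact
Polish space `X`) with finite moments satisfying the Carleman bound
`M^{(n)}(Λⁿ) ≤ C_Λⁿ n!` for each compact `Λ` is uniquely determined by its moment measures. -/
theorem random_measure_determined_by_moments
    {X : Type*} [TopologicalSpace X] [LocallyCompactSpace X] [PolishSpace X]
    [MeasurableSpace X] [BorelSpace X]
    (μ ν : Measure (Measure X)) [IsProbabilityMeasure μ] [IsProbabilityMeasure ν]
    (hμrad : ∀ᵐ η ∂μ, ∀ Λ : Set X, IsCompact Λ → η Λ < ∞)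
    (hνrad : ∀ᵐ η ∂ν, ∀ Λ : Set X, IsCompact Λ → η Λ < ∞)
    (hC : ∀ Λ : Set X, IsCompact Λ → ∃ C : ℝ≥0, ∀ n : ℕ,
      ∫⁻ η, (η Λ) ^ n ∂μ ≤ (C : ℝ≥0∞) ^ n * (n ! : ℝ≥0∞))
    (heq : ∀ (n : ℕ) (A : Fin n → Set X), (∀ j, MeasurableSet (A j)) →
      ∫⁻ η, ∏ j, η (A j) ∂μ = ∫⁻ η, ∏ j, η (A j) ∂ν) :
    μ = ν := by
  exact RandomMeasureMomentAux.Step4.final μ ν hμrad hνrad hC heq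
end

section
/- Suppose μ is a random discrete measure on X (a probability measure on the cone K(X) of discrete Radon measures) with moment measures satisfying condition (C1). Then for every i ∈ ℕ and compact Λ, (1/n!) M_{i+1,1,...,1}(Λ^{(n)}_{0̂}) ≤ (i+1)! C_Λ^{n+i}. -/
open MeasureTheory
open scoped Nat ENNReal NNReal

open Set in
private lemma exists_perm_finset {N : ℕ} (B₀ B : Finset (Fin N)) (h : B₀.card = B.card) :
    ∃ π : Equiv.Perm (Fin N), ∀ k, π k ∈ B ↔ k ∈ B₀ := by
  classical
  have h' : (B₀ᶜ : Finset (Fin N)).card = (Bᶜ : Finset (Fin N)).card := by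
    simp [Finset.card_compl, h]
  let f : {k // k ∈ B₀} ≃ {k // k ∈ B} := Finset.equivOfCardEq h
  let g : {k // ¬ k ∈ B₀} ≃ {k // ¬ k ∈ B} :=
    ((Equiv.subtypeEquivRight (fun k => (Finset.mem_compl (a := k)).symm)).trans
        (Finset.equivOfCardEq h')).trans
      (Equiv.subtypeEquivRight (fun k => Finset.mem_compl))
  refine ⟨(Equiv.sumCompl (· ∈ B₀)).symm.trans ((f.sumCongr g).trans (Equiv.sumCompl (· ∈ B))), ?_⟩
  intro k
  by_cases hk : k ∈ B₀
  · simp only [Equiv.trans_apply, Equiv.sumCompl_symm_apply_of_pos hk,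
      Equiv.sumCongr_apply, Sum.map_inl, Equiv.sumCompl_apply_inl]
    simpa [hk] using (f ⟨k, hk⟩).2
  · simp only [Equiv.trans_apply, Equiv.sumCompl_symm_apply_of_neg hk,
      Equiv.sumCongr_apply, Sum.map_inr, Equiv.sumCompl_apply_inr]
    simpa [hk] using (g ⟨k, hk⟩).2

private lemma restrict_map_perm {X : Type*} [MeasurableSpace X] {N : ℕ}
    {μ : Measure (Measure X)} {MN : Measure (Fin N → X)} {Λ : Set X} (hΛm : MeasurableSet Λ)
    (hmom : ∀ (A : Fin N → Set X), (∀ j, MeasurableSet (A j)) →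
      MN {z | ∀ j, z j ∈ A j} = ∫⁻ η, ∏ j, η (A j) ∂μ)
    (hfin : MN {z | ∀ j, z j ∈ Λ} ≠ ∞)
    (π : Equiv.Perm (Fin N)) {T : Set (Fin N → X)} (hT : MeasurableSet T) :
    MN.restrict {z | ∀ j, z j ∈ Λ} T
      = MN.restrict {z | ∀ j, z j ∈ Λ} ((fun z : Fin N → X => z ∘ π) ⁻¹' T) := by
  classical
  set PΛ : Set (Fin N → X) := {z | ∀ j, z j ∈ Λ} with hPΛ
  set ν := MN.restrict PΛ with hν
  have hf : Measurable (fun z : Fin N → X => z ∘ π) :=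
    measurable_pi_lambda _ fun j => measurable_pi_apply _
  haveI : IsFiniteMeasure ν :=
    ⟨by rw [hν, Measure.restrict_apply_univ]; exact hfin.lt_top⟩
  haveI : IsFiniteMeasure (Measure.map (fun z : Fin N → X => z ∘ π) ν) :=
    ⟨by rw [Measure.map_apply hf .univ, Set.preimage_univ, Measure.restrict_apply_univ]
        exact hfin.lt_top⟩
  have key : Measure.map (fun z : Fin N → X => z ∘ π) ν = ν := by
    refine ext_of_generate_finite _ generateFrom_pi.symm isPiSystem_pi ?_ ?_
    · rintro s ⟨A, hA, rfl⟩
      have hAm : ∀ j, MeasurableSet (A j) := fun j => hA j (Set.mem_univ j)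
      have hset : MeasurableSet (Set.univ.pi A) := MeasurableSet.univ_pi hAm
      rw [Measure.map_apply hf hset]
      have hpre : (fun z : Fin N → X => z ∘ π) ⁻¹' Set.univ.pi A
          = Set.univ.pi (fun k => A (π.symm k)) := by
        ext z
        simp only [Set.mem_preimage, Set.mem_univ_pi, Function.comp]
        constructor
        · intro hz k; simpa using hz (π.symm k)
        · intro hz j; simpa using hz (π j)
      rw [hpre, hν, Measure.restrict_apply (MeasurableSet.univ_pi fun k => hAm (π.symm k)),
        Measure.restrict_apply hset]
      have e1 : Set.univ.pi (fun k => A (π.symm k)) ∩ PΛ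
          = {z | ∀ k, z k ∈ A (π.symm k) ∩ Λ} := by
        ext z
        simp only [Set.mem_inter_iff, Set.mem_univ_pi, hPΛ, Set.mem_setOf_eq]
        exact ⟨fun h k => ⟨h.1 k, h.2 k⟩, fun h => ⟨fun k => (h k).1, fun k => (h k).2⟩⟩
      have e2 : Set.univ.pi A ∩ PΛ = {z | ∀ j, z j ∈ A j ∩ Λ} := by
        ext z
        simp only [Set.mem_inter_iff, Set.mem_univ_pi, hPΛ, Set.mem_setOf_eq]
        exact ⟨fun h k => ⟨h.1 k, h.2 k⟩, fun h => ⟨fun k => (h k).1, fun k => (h k).2⟩⟩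
      rw [e1, e2, hmom _ (fun k => (hAm _).inter hΛm), hmom _ (fun j => (hAm j).inter hΛm)]
      refine lintegral_congr fun η => ?_
      exact Equiv.prod_comp π.symm (fun j => η (A j ∩ Λ))
    · rw [Measure.map_apply hf .univ, Set.preimage_univ]
  conv_lhs => rw [← key]
  rw [Measure.map_apply hf hT]

/-- If `μ` is a random discrete measure on `X` (a probability measure concentrated on discrete
measures `∑ s_a δ_{x_a}`) whose moment measures `M m` satisfy (C1), i.e.
`M m (Λ^m) ≤ C_Λ^m m!` for compact `Λ`, then for every `i` and `n ≥ 1`,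
`(1/n!) M_{i+1,1,...,1}(Λ^{(n)}_{0̂}) ≤ (i+1)! C_Λ^{n+i}`.  The stratum measure
`M_{i+1,1,...,1}` is obtained by restricting `M I` (`I = (i+1) + 1 + ... + 1`) to the
diagonal stratum given by the interval partition with block sizes `(i+1, 1, ..., 1)` —
encoded by the monotone map `c` with fiber cardinalities `e j` and section `rep` — and
pushing forward under the block-value map. -/
theorem random_discrete_measure_stratum_bound
    {X : Type*} [TopologicalSpace X] [PolishSpace X] [MeasurableSpace X] [BorelSpace X]
    (μ : Measure (Measure X)) [IsProbabilityMeasure μ]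
    (hdisc : ∀ᵐ η ∂μ, ∃ (s : ℕ → ℝ≥0∞) (x : ℕ → X),
      η = Measure.sum fun a => s a • Measure.dirac (x a))
    (M : (m : ℕ) → Measure (Fin m → X))
    (hmom : ∀ (m : ℕ) (A : Fin m → Set X), (∀ j, MeasurableSet (A j)) →
      M m {z | ∀ j, z j ∈ A j} = ∫⁻ η, ∏ j, η (A j) ∂μ)
    (Λ : Set X) (hΛ : IsCompact Λ) (C : ℝ≥0)
    (hC1 : ∀ m : ℕ, M m {z | ∀ j, z j ∈ Λ} ≤ (C : ℝ≥0∞) ^ m * (m ! : ℝ≥0∞))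
    (i n : ℕ) (hn : 0 < n) (e : Fin n → ℕ)
    (he : e = fun j => if j = ⟨0, hn⟩ then i + 1 else 1)
    (I : ℕ) (hI : I = ∑ j, e j)
    (c : Fin I → Fin n) (rep : Fin n → Fin I) (hmono : Monotone c)
    (hfib : ∀ j, (Finset.univ.filter fun k => c k = j).card = e j)
    (hrep : ∀ j, c (rep j) = j) :
    Measure.map (fun z : Fin I → X => fun j => z (rep j))
        ((M I).restrict {z | (∀ k l, c k = c l → z k = z l) ∧
          Function.Injective fun j => z (rep j)})
        {y : Fin n → X | (∀ j, y j ∈ Λ) ∧ Function.Injective y}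
      ≤ (n ! : ℝ≥0∞) * (((i + 1)! : ℝ≥0∞) * (C : ℝ≥0∞) ^ (n + i)) := by
  classical
  set j₀ : Fin n := ⟨0, hn⟩ with hj₀
  -- basic facts
  have hIni : I = n + i := by
    rw [hI, he]
    calc ∑ j : Fin n, (if j = j₀ then i + 1 else 1)
        = ∑ j : Fin n, ((if j = j₀ then i else 0) + 1) := by
          refine Finset.sum_congr rfl fun j _ => ?_
          split <;> rfl
      _ = (∑ j : Fin n, if j = j₀ then i else 0) + ∑ _j : Fin n, 1 :=
          Finset.sum_add_distrib
      _ = i + n := by simp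
      _ = n + i := add_comm _ _
  set B₀ : Finset (Fin I) := Finset.univ.filter (fun k => c k = j₀) with hB₀
  have hB₀card : B₀.card = i + 1 := by rw [hB₀, hfib j₀, he]; simp
  have hΛm : MeasurableSet Λ := hΛ.isClosed.measurableSet
  set PΛ : Set (Fin I → X) := {z | ∀ j, z j ∈ Λ} with hPΛ
  have hfin : M I PΛ ≠ ∞ :=
    ne_top_of_le_ne_top
      (ENNReal.mul_ne_top (ENNReal.pow_ne_top ENNReal.coe_ne_top) (ENNReal.natCast_ne_top _))
      (hC1 I)
  set ν := (M I).restrict PΛ with hν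
  -- the strata sets
  set T : Finset (Fin I) → Set (Fin I → X) :=
    fun B => {z | ∀ k l, z k = z l ↔ (k = l ∨ (k ∈ B ∧ l ∈ B))} with hT
  have hzkl : ∀ k l : Fin I, MeasurableSet {z : Fin I → X | z k = z l} := fun k l =>
    StronglyMeasurable.measurableSet_eq_fun (measurable_pi_apply k).stronglyMeasurable
      (measurable_pi_apply l).stronglyMeasurable
  have hTmeas : ∀ B, MeasurableSet (T B) := by
    intro B
    have : T B = ⋂ k, ⋂ l, {z : Fin I → X | z k = z l ↔ (k = l ∨ (k ∈ B ∧ l ∈ B))} := by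
      ext z; simp [hT]
    rw [this]
    refine MeasurableSet.iInter fun k => MeasurableSet.iInter fun l => ?_
    by_cases hq : k = l ∨ (k ∈ B ∧ l ∈ B)
    · simpa [hq] using hzkl k l
    · have := (hzkl k l).compl
      simpa [hq, Set.compl_setOf] using this
  -- measurability of the target set
  set f₀ : (Fin I → X) → (Fin n → X) := fun z => fun j => z (rep j) with hf₀def
  have hf₀ : Measurable f₀ := measurable_pi_lambda _ fun j => measurable_pi_apply _
  set G : Set (Fin n → X) := {y | (∀ j, y j ∈ Λ) ∧ Function.Injective y} with hG
  have hGm : MeasurableSet G := by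
    have h1 : MeasurableSet {y : Fin n → X | ∀ j, y j ∈ Λ} := by
      have : {y : Fin n → X | ∀ j, y j ∈ Λ} = Set.univ.pi fun _ => Λ := by
        ext y; simp [Set.mem_univ_pi]
      rw [this]; exact MeasurableSet.univ_pi fun _ => hΛm
    have h2 : MeasurableSet {y : Fin n → X | Function.Injective y} := by
      have : {y : Fin n → X | Function.Injective y}
          = ⋂ (k) (l) (_ : k ≠ l), {y : Fin n → X | y k = y l}ᶜ := by
        ext y
        simp only [Set.mem_setOf_eq, Set.mem_iInter, Set.mem_compl_iff, Function.Injective]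
        constructor
        · intro h k l hkl hy; exact hkl (h hy)
        · intro h k l hy; by_contra hkl; exact h k l hkl hy
      rw [this]
      exact MeasurableSet.iInter fun k => MeasurableSet.iInter fun l =>
        MeasurableSet.iInter fun _ =>
          (StronglyMeasurable.measurableSet_eq_fun (measurable_pi_apply k).stronglyMeasurable
            (measurable_pi_apply l).stronglyMeasurable).compl
    exact h1.inter h2
  set S : Set (Fin I → X) := {z | (∀ k l, c k = c l → z k = z l) ∧
      Function.Injective fun j => z (rep j)} with hS
  -- rewrite the LHS
  rw [Measure.map_apply hf₀ hGm, Measure.restrict_apply (hf₀ hGm)]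
  -- key inclusion
  have hincl : f₀ ⁻¹' G ∩ S ⊆ T B₀ ∩ PΛ := by
    rintro z ⟨⟨hzΛ, hzinj⟩, hconst, hinj⟩
    have hfix : ∀ k, z k = z (rep (c k)) := fun k => hconst k (rep (c k)) (hrep (c k)).symm
    have hmemB₀ : ∀ k, k ∈ B₀ ↔ c k = j₀ := by intro k; simp [hB₀]
    constructor
    · intro k l
      constructor
      · intro hzeq
        have hckl : c k = c l := by
          apply hinj
          show z (rep (c k)) = z (rep (c l))
          rw [← hfix k, ← hfix l, hzeq]
        by_cases hk0 : c k = j₀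
        · exact Or.inr ⟨(hmemB₀ k).mpr hk0, (hmemB₀ l).mpr (hckl ▸ hk0)⟩
        · left
          have hcard : (Finset.univ.filter fun m => c m = c k).card = 1 := by
            rw [hfib (c k), he]; simp [hk0]
          have hk : k ∈ Finset.univ.filter fun m => c m = c k := by simp
          have hl : l ∈ Finset.univ.filter fun m => c m = c k := by simp [hckl.symm]
          exact Finset.card_le_one.mp (le_of_eq hcard) k hk l hl
      · rintro (rfl | ⟨hk, hl⟩)
        · rfl
        · exact hconst k l (((hmemB₀ k).mp hk).trans ((hmemB₀ l).mp hl).symm)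
    · intro k
      rw [hfix k]
      exact hzΛ (c k)
  -- case i = 0 : crude bound suffices
  rcases Nat.eq_zero_or_pos i with hi0 | hipos
  · subst hi0
    have h1 : M I (f₀ ⁻¹' G ∩ S) ≤ M I PΛ :=
      measure_mono (hincl.trans (Set.inter_subset_right))
    refine h1.trans ((hC1 I).trans ?_)
    rw [hIni]
    simp [Nat.factorial_one, mul_comm]
  -- main case: i ≥ 1
  · have hfinν : ∀ T' : Set (Fin I → X), MeasurableSet T' →
        ∀ π : Equiv.Perm (Fin I), ν T' = ν ((fun z : Fin I → X => z ∘ π) ⁻¹' T') :=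
      fun T' hT' π => restrict_map_perm hΛm (hmom I) hfin π hT'
    -- symmetry: all T B with card B = i+1 have the same ν-measure
    have hsym : ∀ B : Finset (Fin I), B.card = i + 1 → ν (T B) = ν (T B₀) := by
      intro B hB
      obtain ⟨π, hπ⟩ := exists_perm_finset B₀ B (by rw [hB₀card, hB])
      have hπ' : ∀ k, (π.symm k ∈ B₀ ↔ k ∈ B) := fun k => by
        rw [← hπ (π.symm k), Equiv.apply_symm_apply]
      have hpre : (fun z : Fin I → X => z ∘ π) ⁻¹' (T B₀) = T B := by
        ext z
        simp only [Set.mem_preimage, hT, Set.mem_setOf_eq, Function.comp]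
        constructor
        · intro h k l
          have h2 := h (π.symm k) (π.symm l)
          simpa [hπ', Equiv.apply_symm_apply] using h2
        · intro h k l
          have h2 := h (π k) (π l)
          simpa [hπ, EmbeddingLike.apply_eq_iff_eq] using h2
      rw [hfinν (T B₀) (hTmeas B₀) π, hpre]
    -- disjointness
    have hsubkey : ∀ (B B' : Finset (Fin I)) (z : Fin I → X), B.card = i + 1 →
        z ∈ T B → z ∈ T B' → B ⊆ B' := by
      intro B B' z hB hz hz' k hk
      have h2 : 1 < B.card := by omega
      obtain ⟨l, hl, hlk⟩ := Finset.exists_mem_ne h2 k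
      have hzkl : z k = z l := (hz k l).mpr (Or.inr ⟨hk, hl⟩)
      rcases (hz' k l).mp hzkl with h | h
      · exact absurd h.symm hlk
      · exact h.1
    have hdisj : (↑(Finset.powersetCard (i + 1) (Finset.univ : Finset (Fin I))) :
        Set (Finset (Fin I))).PairwiseDisjoint T := by
      intro B hB B' hB' hne
      rw [Finset.mem_coe, Finset.mem_powersetCard] at hB hB'
      refine Set.disjoint_left.mpr fun z hz hz' => hne ?_
      exact Finset.Subset.antisymm (hsubkey B B' z hB.2 hz hz')
        (hsubkey B' B z hB'.2 hz' hz)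
    -- counting
    set K := I.choose (i + 1) with hK
    have hKcard : (Finset.powersetCard (i + 1) (Finset.univ : Finset (Fin I))).card = K := by
      rw [Finset.card_powersetCard]; simp [hK]
    have hsum : (K : ℝ≥0∞) * ν (T B₀) ≤ (C : ℝ≥0∞) ^ I * (I ! : ℝ≥0∞) := by
      have h1 : ∑ B ∈ Finset.powersetCard (i + 1) (Finset.univ : Finset (Fin I)), ν (T B)
          = (K : ℝ≥0∞) * ν (T B₀) := by
        rw [Finset.sum_congr rfl (fun B hB => hsym B (Finset.mem_powersetCard.mp hB).2),
          Finset.sum_const, hKcard, nsmul_eq_mul]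
      rw [← h1, ← measure_biUnion_finset hdisj (fun B _ => hTmeas B)]
      refine (measure_mono (Set.subset_univ _)).trans ?_
      rw [hν, Measure.restrict_apply_univ]
      exact hC1 I
    have hile : i + 1 ≤ I := by omega
    have hfact : K * ((i + 1)! * (n - 1)!) = I ! := by
      have h3 : I - (i + 1) = n - 1 := by omega
      have := Nat.choose_mul_factorial_mul_factorial hile
      rw [h3] at this
      rw [← this, mul_assoc]
    have hK0 : (K : ℝ≥0∞) ≠ 0 :=
      Nat.cast_ne_zero.mpr (Nat.choose_pos hile).ne'
    have hbound : ν (T B₀) ≤ (C : ℝ≥0∞) ^ I * (((i + 1)! : ℝ≥0∞) * ((n - 1)! : ℝ≥0∞)) := by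
      rw [← ENNReal.mul_le_mul_iff_right hK0 (ENNReal.natCast_ne_top K)]
      refine hsum.trans_eq ?_
      rw [← hfact]
      push_cast
      ring
    have hmain : M I (f₀ ⁻¹' G ∩ S) ≤ ν (T B₀) := by
      rw [hν, Measure.restrict_apply (hTmeas B₀)]
      exact measure_mono hincl
    refine hmain.trans (hbound.trans ?_)
    rw [hIni]
    have hfle : ((n - 1)! : ℝ≥0∞) ≤ (n ! : ℝ≥0∞) :=
      Nat.cast_le.mpr (Nat.factorial_le (by omega))
    calc (C : ℝ≥0∞) ^ (n + i) * (((i + 1)! : ℝ≥0∞) * ((n - 1)! : ℝ≥0∞))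
        ≤ (C : ℝ≥0∞) ^ (n + i) * (((i + 1)! : ℝ≥0∞) * (n ! : ℝ≥0∞)) := by
          exact mul_le_mul_right (mul_le_mul_right hfle _) _
      _ = (n ! : ℝ≥0∞) * (((i + 1)! : ℝ≥0∞) * (C : ℝ≥0∞) ^ (n + i)) := by ring
end
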